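/- Let G be a finite simple graph and S ⊆ V(G) such that G ⊕ S is triangle-free, |S| ≥ 3, and S is a clique in G. Then for any two distinct vertices u, v ∈ S, the set (N_G[u] ∩ N_G[v]) \ S is an independent set in G; in particular, the subgraph of G induced by N_G[u] ∩ N_G[v] is a split graph with clique part S. -/

import Mathlib

/-- The partial complement `G ⊕ S` of a simple graph `G` with respect to a vertex set `S`:
distinct vertices `u, v` are adjacent iff either they are adjacent in `G` and not both
belong to `S`, or they are nonadjacent in `G` and both belong to `S`. -/
def SimpleGraph.partialComplement {V : Type*} (G : SimpleGraph V) (S : Set V) :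
    SimpleGraph V where
  Adj u v := u ≠ v ∧ ((G.Adj u v ∧ ¬(u ∈ S ∧ v ∈ S)) ∨ (¬ G.Adj u v ∧ u ∈ S ∧ v ∈ S))
  symm := ⟨by
    intro u v h
    obtain ⟨hne, h⟩ := h
    refine ⟨hne.symm, ?_⟩
    rcases h with ⟨ha, hs⟩ | ⟨ha, hu, hv⟩
    · exact Or.inl ⟨ha.symm, fun hc => hs ⟨hc.2, hc.1⟩⟩
    · exact Or.inr ⟨fun hvu => ha hvu.symm, hv, hu⟩⟩
  loopless := ⟨fun v h => h.1 rfl⟩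

/-- An independent set in a simple graph: a set of pairwise nonadjacent vertices. -/
def SimpleGraph.IsIndepSet' {V : Type*} (G : SimpleGraph V) (A : Set V) : Prop :=
  ∀ ⦃x⦄, x ∈ A → ∀ ⦃y⦄, y ∈ A → x ≠ y → ¬ G.Adj x y

/-- If `G ⊕ S` is triangle-free, `|S| ≥ 3` and `S` is a clique in `G`, then for any two
distinct `u, v ∈ S`, the set `(N_G[u] ∩ N_G[v]) \ S` is an independent set in `G`;
in particular, the subgraph of `G` induced by `N_G[u] ∩ N_G[v]` is a split graph with
clique part `S`: it is partitioned into the clique `S` and an independent set. -/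
theorem clique_solution_split_structure {V : Type*} [Fintype V]
    (G : SimpleGraph V) (S : Set V)
    (h : (G.partialComplement S).CliqueFree 3)
    (hcard : 3 ≤ S.ncard) (hclique : G.IsClique S)
    (u v : V) (hu : u ∈ S) (hv : v ∈ S) (huv : u ≠ v) :
    G.IsIndepSet' ((insert u (G.neighborSet u) ∩ insert v (G.neighborSet v)) \ S) ∧
    S ∪ ((insert u (G.neighborSet u) ∩ insert v (G.neighborSet v)) \ S) =
      insert u (G.neighborSet u) ∩ insert v (G.neighborSet v) := by
  classical
  constructor
  · intro x hx y hy hxy hadj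
    obtain ⟨⟨hxu, hxv⟩, hxS⟩ := hx
    obtain ⟨⟨hyu, hyv⟩, hyS⟩ := hy
    have hxu' : G.Adj u x := by
      rcases hxu with h1 | h1
      · exact absurd (h1 ▸ hu) hxS
      · exact h1
    have hyu' : G.Adj u y := by
      rcases hyu with h1 | h1
      · exact absurd (h1 ▸ hu) hyS
      · exact h1
    have : (G.partialComplement S).IsNClique 3 ({u, x, y} : Finset V) := by
      rw [SimpleGraph.is3Clique_triple_iff]
      refine ⟨⟨hxu'.ne, Or.inl ⟨hxu', fun hc => hxS hc.2⟩⟩,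
        ⟨hyu'.ne, Or.inl ⟨hyu', fun hc => hyS hc.2⟩⟩,
        ⟨hxy, Or.inl ⟨hadj, fun hc => hxS hc.1⟩⟩⟩
    exact h _ this
  · apply Set.union_diff_cancel
    intro w hw
    constructor
    · rcases eq_or_ne w u with rfl | hne
      · exact Set.mem_insert _ _
      · exact Set.mem_insert_of_mem _ ((hclique hu hw hne.symm) : G.Adj u w)
    · rcases eq_or_ne w v with rfl | hne
      · exact Set.mem_insert _ _
      · exact Set.mem_insert_of_mem _ ((hclique hv hw hne.symm) : G.Adj v w)
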